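/- Let S be a commutative Noetherian ring, M a finitely generated S-module, and 𝔭 a prime ideal of S. Then there exist t ≥ 0 and a chain of S-submodules 0 = N₀ ⊊ N₁ ⊊ ⋯ ⊊ N_t ⊆ M such that: (a) for each i = 1,…,t, the submodule N_{i−1} is 𝔭-closed in N_i, and each N_i (including N_t) is 𝔭-closed in M; (b) for each i = 1,…,t, the quotient N_i/N_{i−1} is a nonzero cyclic S-module; and (c) the localization (M/N_t)_𝔭 is zero. -/

import Mathlib

open Submodule Function

section Aux

variable {S : Type*} [CommRing S] {M : Type*} [AddCommGroup M] [Module S M]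

/-- Independence modulo `𝔭 • ⊤`. -/
private def PIndep (𝔭 : Ideal S) {t : ℕ} (x : Fin t → M) : Prop :=
  ∀ a : Fin t → S, (∑ j, a j • x j) ∈ (𝔭 • ⊤ : Submodule S M) → ∀ j, a j ∈ 𝔭

private lemma sum_extend {t n : ℕ} (x : Fin t → M) (ι : Fin n → Fin t)
    (hι : Function.Injective ι) (c : Fin n → S) :
    ∑ j, Function.extend ι c 0 j • x j = ∑ k, c k • x (ι k) := by
  classical
  rw [show (∑ j, Function.extend ι c 0 j • x j)
      = ∑ j ∈ Finset.univ.image ι, Function.extend ι c 0 j • x j from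
    (Finset.sum_subset (Finset.subset_univ _) ?_).symm]
  · rw [Finset.sum_image (fun i _ j _ h => hι h)]
    refine Finset.sum_congr rfl fun k _ => ?_
    rw [hι.extend_apply]
  · intro j _ hj
    rw [Function.extend_apply', Pi.zero_apply, zero_smul]
    rintro ⟨k, rfl⟩
    exact hj (Finset.mem_image_of_mem ι (Finset.mem_univ k))

private lemma pindep_span_inf (𝔭 : Ideal S) {t : ℕ} {x : Fin t → M} (hx : PIndep 𝔭 x)
    {n : ℕ} (ι : Fin n → Fin t) (hι : Function.Injective ι) :
    Submodule.span S (Set.range (x ∘ ι)) ⊓ 𝔭 • (⊤ : Submodule S M)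
      ≤ 𝔭 • Submodule.span S (Set.range (x ∘ ι)) := by
  classical
  rintro m hm
  obtain ⟨hm1, hm2⟩ := Submodule.mem_inf.mp hm
  obtain ⟨c, hc⟩ := (mem_span_range_iff_exists_fun S).mp hm1
  have hsum : ∑ j, Function.extend ι c 0 j • x j = m := by
    rw [sum_extend x ι hι c]; exact hc
  have hmem : ∀ j, Function.extend ι c 0 j ∈ 𝔭 := hx _ (hsum ▸ hm2)
  rw [← hc]
  refine Submodule.sum_mem _ fun k _ => Submodule.smul_mem_smul ?_
    (Submodule.subset_span ⟨k, rfl⟩)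
  have h := hmem (ι k)
  rwa [hι.extend_apply] at h

end Aux

/-- Let `S` be a commutative Noetherian ring, `M` a finitely
generated `S`-module and `𝔭` a prime ideal of `S`.  Then there is a chain of
submodules `0 = N₀ ⊊ N₁ ⊊ ⋯ ⊊ N_t ⊆ M` (a `𝔭`-series) such that:
(a) each `N_{i-1}` is `𝔭`-closed in `N_i` (`N_{i-1} ⊓ 𝔭•N_i = 𝔭•N_{i-1}`) and each
`N_i` (including `N_t`) is `𝔭`-closed in `M`;
(b) each quotient `N_i/N_{i-1}` is a nonzero cyclic `S`-module, i.e.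
`N_{i-1} < N_i` and `N_i = N_{i-1} ⊔ S·x` for some `x`;
(c) the localization `(M/N_t)_𝔭` is zero. -/
theorem exists_prime_series {S : Type*} [CommRing S] [IsNoetherianRing S]
    {M : Type*} [AddCommGroup M] [Module S M] [Module.Finite S M]
    (𝔭 : Ideal S) [𝔭.IsPrime] :
    ∃ (t : ℕ) (N : Fin (t + 1) → Submodule S M),
      N 0 = ⊥ ∧
      (∀ i : Fin t, N i.castSucc < N i.succ) ∧
      (∀ i : Fin t, N i.castSucc ⊓ 𝔭 • N i.succ = 𝔭 • N i.castSucc) ∧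
      (∀ i : Fin (t + 1), N i ⊓ 𝔭 • (⊤ : Submodule S M) = 𝔭 • N i) ∧
      (∀ i : Fin t, ∃ x : M, N i.succ = N i.castSucc ⊔ Submodule.span S {x}) ∧
      Subsingleton (LocalizedModule 𝔭.primeCompl (M ⧸ N (Fin.last t))) := by
  classical
  have hone : (1 : S) ∉ 𝔭 := fun h => ‹𝔭.IsPrime›.ne_top ((Ideal.eq_top_iff_one 𝔭).mpr h)
  -- the collection of candidate submodules
  set C : Set (Submodule S M) :=
    {P | ∃ (t : ℕ) (x : Fin t → M), PIndep 𝔭 x ∧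
          P = span S (Set.range x) ⊔ 𝔭 • (⊤ : Submodule S M)} with hCdef
  have hC : C.Nonempty :=
    ⟨span S (Set.range (fun _ : Fin 0 => (0 : M))) ⊔ 𝔭 • ⊤,
      0, fun _ : Fin 0 => 0, fun _ _ j => j.elim0, rfl⟩
  obtain ⟨P, hPC, hPmax⟩ :=
    (set_has_maximal_iff_noetherian.mpr inferInstance) C hC
  obtain ⟨t, x, hx, rfl⟩ := hPC
  -- maximality claim
  have hmax : ∀ y : M, ∃ a, a ∉ 𝔭 ∧
      a • y ∈ span S (Set.range x) ⊔ 𝔭 • (⊤ : Submodule S M) := by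
    intro y
    by_contra hcon
    push_neg at hcon
    have hind : PIndep 𝔭 (Fin.snoc x y) := by
      intro a hsum j
      rw [Fin.sum_univ_castSucc] at hsum
      simp only [Fin.snoc_castSucc, Fin.snoc_last] at hsum
      by_cases hl : a (Fin.last t) ∈ 𝔭
      · have h2 : a (Fin.last t) • y ∈ (𝔭 • ⊤ : Submodule S M) :=
          Submodule.smul_mem_smul hl (Submodule.mem_top : y ∈ ⊤)
        have h1 := Submodule.sub_mem _ hsum h2
        rw [add_sub_cancel_right] at h1
        have hcs := hx (fun i => a i.castSucc) h1
        exact Fin.lastCases hl hcs j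
      · exfalso
        refine hcon _ hl ?_
        have h1 : a (Fin.last t) • y
            = (∑ i : Fin t, a i.castSucc • x i + a (Fin.last t) • y)
              - ∑ i : Fin t, a i.castSucc • x i := by rw [add_sub_cancel_left]
        rw [h1]
        refine Submodule.sub_mem _ (Submodule.mem_sup_right hsum)
          (Submodule.mem_sup_left ?_)
        exact Submodule.sum_mem _ fun i _ =>
          Submodule.smul_mem _ _ (Submodule.subset_span ⟨i, rfl⟩)
    refine hPmax (span S (Set.range (Fin.snoc x y : Fin (t + 1) → M)) ⊔ 𝔭 • ⊤)
      ⟨t + 1, Fin.snoc x y, hind, rfl⟩ ?_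
    refine lt_of_le_of_ne
      (sup_le_sup_right (Submodule.span_mono ?_) _) ?_
    · rintro _ ⟨i, rfl⟩
      exact ⟨i.castSucc, by simp⟩
    · intro heq
      refine hcon 1 hone ?_
      rw [one_smul, heq]
      exact Submodule.mem_sup_left
        (Submodule.subset_span ⟨Fin.last t, by simp⟩)
  -- the series
  have hsub : ∀ i : Fin t,
      span S (Set.range (x ∘ Fin.castLE (i.castSucc).is_le))
        ≤ span S (Set.range (x ∘ Fin.castLE (i.succ).is_le)) := by
    intro i
    refine Submodule.span_mono ?_
    rintro _ ⟨k, rfl⟩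
    exact ⟨⟨(k : ℕ), by simpa using Nat.lt_succ_of_lt (by simpa using k.isLt)⟩, rfl⟩
  have hclosed : ∀ i : Fin (t + 1),
      span S (Set.range (x ∘ Fin.castLE i.is_le)) ⊓ 𝔭 • (⊤ : Submodule S M)
        = 𝔭 • span S (Set.range (x ∘ Fin.castLE i.is_le)) := by
    intro i
    refine le_antisymm (pindep_span_inf 𝔭 hx _ (Fin.castLE_injective _)) ?_
    exact le_inf Submodule.smul_le_right (Submodule.smul_mono le_rfl le_top)
  refine ⟨t, fun i => span S (Set.range (x ∘ Fin.castLE i.is_le)), ?_, ?_, ?_,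
    hclosed, ?_, ?_⟩
  · -- `N 0 = ⊥`
    rw [Submodule.span_eq_bot]
    rintro m ⟨k, rfl⟩
    exact absurd k.2 (by simp)
  · -- strictness
    intro i
    refine lt_of_le_of_ne (hsub i) fun heq => ?_
    beta_reduce at heq
    have hxi : x i ∈ span S (Set.range (x ∘ Fin.castLE (i.castSucc).is_le)) := by
      rw [heq]
      exact Submodule.subset_span ⟨Fin.last (i : ℕ), rfl⟩
    obtain ⟨c, hc⟩ := (mem_span_range_iff_exists_fun S).mp hxi
    simp only [Function.comp_apply] at hc
    have hinj : Function.Injective (Fin.castLE (i.castSucc).is_le) :=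
      Fin.castLE_injective _
    have hsum : ∑ j, (Function.extend (Fin.castLE (i.castSucc).is_le) c 0 j
        - (if j = i then 1 else 0)) • x j = 0 := by
      simp only [sub_smul, Finset.sum_sub_distrib]
      rw [sum_extend x _ hinj c, hc]
      simp [ite_smul]
    have hz : (∑ j, (Function.extend (Fin.castLE (i.castSucc).is_le) c 0 j
        - (if j = i then 1 else 0)) • x j) ∈ (𝔭 • ⊤ : Submodule S M) := by
      rw [hsum]; exact Submodule.zero_mem _
    have hmem := hx _ hz i
    rw [Function.extend_apply'] at hmem
    · rw [Pi.zero_apply, if_pos rfl, zero_sub] at hmem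
      exact hone (neg_mem_iff.mp hmem)
    · rintro ⟨k, hk⟩
      have h1 : (k : ℕ) = (i : ℕ) := by simpa using congrArg Fin.val hk
      have h2 : (k : ℕ) < (i : ℕ) := by simpa using k.isLt
      omega
  · -- closedness of the pair
    intro i
    refine le_antisymm ?_
      (le_inf Submodule.smul_le_right (Submodule.smul_mono le_rfl (hsub i)))
    intro m hm
    obtain ⟨h1, h2⟩ := Submodule.mem_inf.mp hm
    rw [← hclosed i.castSucc]
    exact Submodule.mem_inf.mpr ⟨h1, Submodule.smul_mono le_rfl le_top h2⟩
  · -- cyclic quotients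
    intro i
    refine ⟨x i, ?_⟩
    have hset : Set.range (x ∘ Fin.castLE (i.succ).is_le)
        = Set.range (x ∘ Fin.castLE (i.castSucc).is_le) ∪ {x i} := by
      ext m
      constructor
      · rintro ⟨k, rfl⟩
        rcases lt_or_ge (k : ℕ) (i : ℕ) with h | h
        · exact Or.inl ⟨⟨(k : ℕ), h⟩, rfl⟩
        · have hk : (k : ℕ) = (i : ℕ) :=
            le_antisymm (Nat.lt_succ_iff.mp (by simpa using k.isLt)) h
          exact Or.inr (show _ = x i from congrArg x (Fin.ext (by simpa using hk)))
      · rintro (⟨k, rfl⟩ | h)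
        · exact ⟨⟨(k : ℕ), by simpa using Nat.lt_succ_of_lt (by simpa using k.isLt)⟩, rfl⟩
        · rw [Set.mem_singleton_iff] at h
          exact ⟨Fin.last (i : ℕ), h.symm⟩
    beta_reduce
    rw [hset, Submodule.span_union]
  · -- the localization of the quotient vanishes
    have hNt : span S (Set.range (x ∘ Fin.castLE (Fin.last t).is_le))
        = span S (Set.range x) := rfl
    set Nt : Submodule S M := span S (Set.range (x ∘ Fin.castLE (Fin.last t).is_le))
      with hNtdef
    -- a single multiplier working for all of `M`
    obtain ⟨s, hs⟩ := Module.Finite.fg_top (R := S) (M := M)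
    choose a ha1 ha2 using hmax
    set b : S := ∏ m ∈ s, a m with hb
    have hbmem : b ∈ 𝔭.primeCompl := Submonoid.prod_mem _ fun m _ => ha1 m
    have hbP : ∀ m : M, b • m ∈ Nt ⊔ 𝔭 • (⊤ : Submodule S M) := by
      intro m
      have hm : m ∈ span S (s : Set M) := hs ▸ Submodule.mem_top
      rw [hNt]
      induction hm using Submodule.span_induction with
      | mem g hg =>
          rw [hb, ← Finset.mul_prod_erase s a hg, mul_comm, mul_smul]
          exact Submodule.smul_mem _ _ (ha2 g)
      | zero => simp
      | add u v hu hv hu' hv' => rw [smul_add]; exact Submodule.add_mem _ hu' hv'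
      | smul r u hu hu' => rw [smul_comm]; exact Submodule.smul_mem _ _ hu'
    -- Cayley–Hamilton
    haveI : Module.Finite S (M ⧸ Nt) :=
      Module.Finite.of_surjective Nt.mkQ (Submodule.mkQ_surjective Nt)
    set φ : Module.End S (M ⧸ Nt) := b • (LinearMap.id : M ⧸ Nt →ₗ[S] M ⧸ Nt) with hφ
    have hrange : LinearMap.range φ ≤ 𝔭 • (⊤ : Submodule S (M ⧸ Nt)) := by
      rintro _ ⟨q, rfl⟩
      obtain ⟨m, rfl⟩ := Submodule.mkQ_surjective Nt q
      obtain ⟨u, hu, v, hv, huv⟩ := Submodule.mem_sup.mp (hbP m)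
      have h1 : φ (Nt.mkQ m) = Nt.mkQ v := by
        rw [hφ]
        simp only [LinearMap.smul_apply, LinearMap.id_apply, ← map_smul, ← huv, map_add]
        have hu0 : Nt.mkQ u = 0 := by
          simpa [Submodule.mkQ_apply] using (Submodule.Quotient.mk_eq_zero Nt).mpr hu
        rw [hu0, zero_add]
      rw [h1]
      have h2 : Nt.mkQ v ∈ (𝔭 • (⊤ : Submodule S M)).map Nt.mkQ :=
        Submodule.mem_map_of_mem hv
      rwa [Submodule.map_smul'', Submodule.map_top, Submodule.range_mkQ] at h2
    obtain ⟨p, hmonic, -, hcoeff, heval⟩ :=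
      LinearMap.exists_monic_and_coeff_mem_pow_and_aeval_eq_zero_of_range_le_smul
        S φ 𝔭 hrange
    -- `p.eval b` is outside `𝔭` and kills the quotient
    have hev : p.eval b ∉ 𝔭 := by
      intro hr
      have h1 : p.eval b = ∑ k ∈ Finset.range (p.natDegree + 1), p.coeff k * b ^ k :=
        Polynomial.eval_eq_sum_range b
      rw [Finset.sum_range_succ, hmonic.coeff_natDegree, one_mul] at h1
      have h2 : (∑ k ∈ Finset.range p.natDegree, p.coeff k * b ^ k) ∈ 𝔭 := by
        refine Ideal.sum_mem _ fun k hk => Ideal.mul_mem_right _ _ ?_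
        have := hcoeff k
        exact Ideal.pow_le_self (Nat.sub_ne_zero_of_lt (Finset.mem_range.mp hk)) this
      have h3 : b ^ p.natDegree ∈ 𝔭 := by
        have : b ^ p.natDegree = p.eval b
            - ∑ k ∈ Finset.range p.natDegree, p.coeff k * b ^ k := by
          rw [h1]; ring
        rw [this]; exact Ideal.sub_mem _ hr h2
      exact hbmem (‹𝔭.IsPrime›.mem_of_pow_mem _ h3)
    have hkill : ∀ q : M ⧸ Nt, p.eval b • q = 0 := by
      intro q
      have hφ' : φ = algebraMap S (Module.End S (M ⧸ Nt)) b := by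
        rw [Module.algebraMap_end_eq_smul_id, hφ]
      rw [hφ', Polynomial.aeval_algebraMap_apply_eq_algebraMap_eval] at heval
      have := congrArg (fun f : Module.End S (M ⧸ Nt) => f q) heval
      simpa [Module.algebraMap_end_apply] using this
    rw [LocalizedModule.subsingleton_iff]
    intro q
    exact ⟨p.eval b, hev, hkill q⟩
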